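/- Fix n ≥ 0 and coordinates (z₀,…,z_n) on ℂ^{n+1}. Let γ : ℂ^{n+1} → ℂ be smooth (as a function on ℝ^{2n+2}) and vanish to infinite order on Z′ := {0}×ℂⁿ. Then there exist smooth functions γ₁, γ₂ : ℂ^{n+1} → ℂ, each vanishing to infinite order on Z′, such that γ(z₀,…,z_n) = z₀·γ₁(z₀,…,z_n) and γ(z₀,…,z_n) = conj(z₀)·γ₂(z₀,…,z_n) for all (z₀,…,z_n) ∈ ℂ^{n+1}. -/

import Mathlib

open ContinuousLinearMap Set Metric Asymptotics

noncomputable section Stmt10Aux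

abbrev EE (n : ℕ) := ℂ × (Fin n → ℂ)

variable {n : ℕ} {F G : Type*} [NormedAddCommGroup F] [NormedSpace ℂ F]
  [NormedAddCommGroup G] [NormedSpace ℂ G]

/-- smooth and vanishing to infinite order on `{0} × ℂⁿ`. -/
def Good (n : ℕ) (h : EE n → F) : Prop :=
  ContDiff ℝ (⊤ : ℕ∞) h ∧ ∀ z : EE n, z.1 = 0 → ∀ m : ℕ, iteratedFDeriv ℝ m h z = 0

lemma Good.zero_at {h : EE n → F} (hh : Good n h) {z : EE n} (hz : z.1 = 0) : h z = 0 := by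
  have h0 : ‖h z‖ = 0 := by
    rw [← norm_iteratedFDeriv_zero (𝕜 := ℝ), hh.2 z hz 0, norm_zero]
  simpa using h0

lemma good_fderiv {h : EE n → F} (hh : Good n h) : Good n (fderiv ℝ h) := by
  refine ⟨hh.1.fderiv_right (by simp), fun z hz m => ?_⟩
  have : ‖iteratedFDeriv ℝ m (fderiv ℝ h) z‖ = 0 := by
    rw [norm_iteratedFDeriv_fderiv, hh.2 z hz (m+1), norm_zero]
  simpa using this

lemma good_fderiv_zero_at {h : EE n → F} (hh : Good n h) {z : EE n} (hz : z.1 = 0) :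
    fderiv ℝ h z = 0 := (good_fderiv hh).zero_at hz

lemma Good.clm_comp {h : EE n → F} (hh : Good n h) (L : F →L[ℝ] G) :
    Good n (fun z => L (h z)) := by
  refine ⟨L.contDiff.comp hh.1, fun z hz m => ?_⟩
  have heq : (fun z => L (h z)) = L ∘ h := rfl
  rw [heq, L.iteratedFDeriv_comp_left (hh.1.contDiffAt (x := z)) (by exact_mod_cast (le_top : (m : ℕ∞) ≤ ⊤)),
    hh.2 z hz m]
  ext v
  simp

lemma Good.add {h g : EE n → F} (hh : Good n h) (hg : Good n g) :
    Good n (fun z => h z + g z) := by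
  refine ⟨hh.1.add hg.1, fun z hz m => ?_⟩
  show iteratedFDeriv ℝ m (h + g) z = 0
  rw [iteratedFDeriv_add_apply (hh.1.of_le (by exact_mod_cast (le_top : (m : ℕ∞) ≤ ⊤))).contDiffAt
    (hg.1.of_le (by exact_mod_cast (le_top : (m : ℕ∞) ≤ ⊤))).contDiffAt]
  rw [hh.2 z hz m, hg.2 z hz m, add_zero]

/-- The key Taylor-type estimate: a Good function decays faster than any power of `‖w.1‖`
near any point of `{0} × ℂⁿ`. -/
lemma flat_bound : ∀ (N : ℕ) {F : Type*} [NormedAddCommGroup F] [NormedSpace ℂ F]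
    (h : EE n → F), Good n h → ∀ z : EE n, z.1 = 0 →
    ∃ C r : ℝ, 0 ≤ C ∧ 0 < r ∧ ∀ w : EE n, dist w z < r → ‖h w‖ ≤ C * ‖w.1‖ ^ N := by
  intro N
  induction N with
  | zero =>
    intro F _ _ h hh z _
    obtain ⟨C, hC⟩ := (isCompact_closedBall z 1).exists_bound_of_continuousOn
      (hh.1.continuous.continuousOn (s := closedBall z 1)).norm
    refine ⟨max C 0, 1, le_max_right _ _, one_pos, fun w hw => ?_⟩
    simp only [pow_zero, mul_one]
    have := hC w (ball_subset_closedBall (mem_ball.2 hw))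
    rw [norm_norm] at this
    exact le_trans this (le_max_left _ _)
  | succ N ih =>
    intro F _ _ h hh z hz
    obtain ⟨C, r, hC0, hr, hC⟩ := ih (fderiv ℝ h) (good_fderiv hh) z hz
    refine ⟨C, r, hC0, hr, fun w hw => ?_⟩
    set p : EE n := (0, w.2) with hp
    have hdistwz : dist w z = max ‖w.1‖ (dist w.2 z.2) := by
      rw [Prod.dist_eq, hz, dist_zero_right]
    -- segment from p to w stays within distance `dist w z` of z
    have hseg : ∀ x ∈ segment ℝ p w, dist x z ≤ dist w z ∧ ‖x.1‖ ≤ ‖w.1‖ := by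
      intro x hx
      obtain ⟨s, t, hs, ht, hst, rfl⟩ := hx
      have hx1 : (s • p + t • w).1 = t • w.1 := by simp [hp]
      have hx2 : (s • p + t • w).2 = w.2 := by
        have : s • w.2 + t • w.2 = w.2 := by rw [← add_smul, hst, one_smul]
        simpa [hp, Prod.smul_fst, Prod.smul_snd] using this
      constructor
      · rw [Prod.dist_eq, hx1, hx2, hz, dist_zero_right, hdistwz]
        apply max_le_max _ le_rfl
        rw [norm_smul]
        calc ‖t‖ * ‖w.1‖ ≤ 1 * ‖w.1‖ := by
              apply mul_le_mul_of_nonneg_right _ (norm_nonneg _)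
              rw [Real.norm_eq_abs, abs_of_nonneg ht]; linarith
          _ = ‖w.1‖ := one_mul _
      · rw [hx1, norm_smul, Real.norm_eq_abs, abs_of_nonneg ht]
        nlinarith [norm_nonneg w.1]
    have hps : p ∈ segment ℝ p w := left_mem_segment ℝ p w
    have hws : w ∈ segment ℝ p w := right_mem_segment ℝ p w
    have key := (convex_segment p w).norm_image_sub_le_of_norm_fderiv_le
      (f := h) (C := C * ‖w.1‖ ^ N)
      (fun x _ => (hh.1.differentiable (by simp)).differentiableAt)
      (fun x hx => by
        have h1 := (hseg x hx).1
        have h2 := (hseg x hx).2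
        calc ‖fderiv ℝ h x‖ ≤ C * ‖x.1‖ ^ N := hC x (lt_of_le_of_lt h1 hw)
          _ ≤ C * ‖w.1‖ ^ N := by
              apply mul_le_mul_of_nonneg_left _ hC0
              exact pow_le_pow_left₀ (norm_nonneg _) h2 N)
      hps hws
    have hp0 : h p = 0 := hh.zero_at (by simp [hp])
    have hwp : ‖w - p‖ = ‖w.1‖ := by
      have : w - p = (w.1, 0) := by simp [hp, Prod.ext_iff]
      rw [this]
      simp [Prod.norm_def]
    calc ‖h w‖ = ‖h w - h p‖ := by rw [hp0, sub_zero]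
      _ ≤ C * ‖w.1‖ ^ N * ‖w - p‖ := key
      _ = C * ‖w.1‖ ^ (N + 1) := by rw [hwp, pow_succ]; ring


def cab (a b : ℕ) (w : ℂ) : ℂ := (w ^ a)⁻¹ * ((starRingEnd ℂ) w ^ b)⁻¹

def fstL (n : ℕ) : EE n →L[ℝ] ℂ := ContinuousLinearMap.fst ℝ ℂ (Fin n → ℂ)

def conjL : ℂ →L[ℝ] ℂ := Complex.conjCLE.toContinuousLinearMap

/-- the quotient `h z / (z₀^a * conj z₀ ^ b)` (with junk value conventions of `⁻¹`). -/
def Term (a b : ℕ) (h : EE n → F) : EE n → F := fun z => cab a b z.1 • h z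

@[simp] lemma fstL_apply (v : EE n) : fstL n v = v.1 := rfl

@[simp] lemma conjL_apply (w : ℂ) : conjL w = (starRingEnd ℂ) w := rfl

lemma norm_cab (a b : ℕ) (w : ℂ) : ‖cab a b w‖ = (‖w‖ ^ (a + b))⁻¹ := by
  simp [cab, norm_inv, norm_pow, pow_add, mul_inv, mul_comm]

lemma term_zero_at {h : EE n → F} (hh : Good n h) {z : EE n} (hz : z.1 = 0) (a b : ℕ) :
    Term a b h z = 0 := by
  rw [Term, hh.zero_at hz, smul_zero]

/-- norm estimate for `Term` near `Z'`. -/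
lemma term_bound (a b N : ℕ) {h : EE n → F} (hh : Good n h) {z : EE n} (hz : z.1 = 0) :
    ∃ C r : ℝ, 0 ≤ C ∧ 0 < r ∧ ∀ w : EE n, dist w z < r →
      ‖Term a b h w‖ ≤ C * ‖w.1‖ ^ N := by
  obtain ⟨C, r, hC0, hr, hC⟩ := flat_bound (N + (a + b)) h hh z hz
  refine ⟨C, r, hC0, hr, fun w hw => ?_⟩
  rcases eq_or_ne w.1 0 with h0 | h0
  · rw [term_zero_at hh h0, norm_zero]
    positivity
  · rw [Term, norm_smul, norm_cab]
    calc (‖w.1‖ ^ (a + b))⁻¹ * ‖h w‖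
        ≤ (‖w.1‖ ^ (a + b))⁻¹ * (C * ‖w.1‖ ^ (N + (a + b))) := by
          apply mul_le_mul_of_nonneg_left (hC w hw) (by positivity)
      _ = C * ‖w.1‖ ^ N := by
          have : ‖w.1‖ ≠ 0 := by
            simpa using h0
          rw [pow_add]
          field_simp
          ring


lemma hasDerivAt_pow_inv (a : ℕ) {w : ℂ} (hw : w ≠ 0) :
    HasDerivAt (fun u : ℂ => (u ^ a)⁻¹) (-(a : ℂ) * (w ^ (a + 1))⁻¹) w := by
  have h := hasDerivAt_zpow (-(a : ℤ)) w (Or.inl hw)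
  have heq : (fun u : ℂ => u ^ (-(a:ℤ))) = fun u : ℂ => (u ^ a)⁻¹ := by
    funext u
    rw [zpow_neg, zpow_natCast]
  rw [heq] at h
  have hder : -(a : ℂ) * (w ^ (a + 1))⁻¹ = ((-(a:ℤ) : ℤ) : ℂ) * w ^ (-(a:ℤ) - 1) := by
    rw [show (-(a:ℤ) - 1) = -((a + 1 : ℕ) : ℤ) from by push_cast; ring, zpow_neg, zpow_natCast]
    push_cast
    ring
  rw [hder]
  exact h

/-- derivative of `z ↦ cab a b z.1`. -/
lemma hasFDerivAt_cab (a b : ℕ) {z : EE n} (hz : z.1 ≠ 0) :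
    HasFDerivAt (fun z : EE n => cab a b z.1)
      ((-(a : ℂ) * cab (a + 1) b z.1) • fstL n
        + (-(b : ℂ) * cab a (b + 1) z.1) • (conjL.comp (fstL n))) z := by
  have hzc : (starRingEnd ℂ) z.1 ≠ 0 := by simpa using hz
  have h1 : HasFDerivAt (fun z : EE n => ((z.1) ^ a)⁻¹)
      ((-(a : ℂ) * (z.1 ^ (a + 1))⁻¹) • fstL n) z := by
    have := (((hasDerivAt_pow_inv a hz).hasFDerivAt).restrictScalars ℝ).comp z
      ((fstL n).hasFDerivAt)
    refine this.congr_fderiv ?_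
    ext v <;>
    simp [fstL, mul_comm, ContinuousLinearMap.coe_comp', Function.comp, ContinuousLinearMap.inr_apply,
      ContinuousLinearMap.inl_apply, ContinuousLinearMap.smul_apply,
      ContinuousLinearMap.smulRight_apply, ContinuousLinearMap.coe_restrictScalars']
  have h2 : HasFDerivAt (fun z : EE n => (((starRingEnd ℂ) z.1) ^ b)⁻¹)
      ((-(b : ℂ) * ((starRingEnd ℂ) z.1 ^ (b + 1))⁻¹) • (conjL.comp (fstL n))) z := by
    have := (((hasDerivAt_pow_inv b hzc).hasFDerivAt).restrictScalars ℝ).comp z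
      ((conjL.comp (fstL n)).hasFDerivAt)
    refine this.congr_fderiv ?_
    ext v <;>
    simp [fstL, conjL, mul_comm, ContinuousLinearMap.coe_comp', Function.comp, ContinuousLinearMap.inr_apply,
      ContinuousLinearMap.inl_apply, ContinuousLinearMap.smul_apply,
      ContinuousLinearMap.smulRight_apply, ContinuousLinearMap.coe_restrictScalars']
  have H := h1.mul h2
  refine H.congr_fderiv ?_
  simp only [cab, smul_smul]
  module


/-- The derivative of `Term a b h`, again a sum of `Term`s. -/
def Dh (a b : ℕ) (h : EE n → F) : EE n → (EE n →L[ℝ] F) := fun z =>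
  Term a b (fderiv ℝ h) z
    + Term (a + 1) b (fun z => (fstL n).smulRight ((-(a : ℂ)) • h z)) z
    + Term a (b + 1) (fun z => (conjL.comp (fstL n)).smulRight ((-(b : ℂ)) • h z)) z

set_option maxHeartbeats 1000000 in
lemma term_hasFDerivAt (a b : ℕ) {h : EE n → F} (hh : Good n h) (z : EE n) :
    HasFDerivAt (Term a b h) (Dh a b h z) z := by
  rcases eq_or_ne z.1 0 with hz | hz
  · -- on Z' : the derivative is 0 and we use the flatness estimate
    have hD : Dh a b h z = 0 := by
      have e1 : Term a b (fderiv ℝ h) z = 0 := by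
        rw [Term, good_fderiv_zero_at hh hz, smul_zero]
      have e2 : Term (a + 1) b (fun z => (fstL n).smulRight ((-(a : ℂ)) • h z)) z = 0 := by
        have hsr : (fstL n).smulRight (0 : F) = 0 := ContinuousLinearMap.ext fun w => by simp
        rw [Term, hh.zero_at hz, smul_zero, hsr, smul_zero]
      have e3 : Term a (b + 1) (fun z => (conjL.comp (fstL n)).smulRight ((-(b : ℂ)) • h z)) z
          = 0 := by
        have hsr : (conjL.comp (fstL n)).smulRight (0 : F) = 0 := ContinuousLinearMap.ext fun w => by simp
        rw [Term, hh.zero_at hz, smul_zero, hsr, smul_zero]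
      rw [Dh, e1, e2, e3, add_zero, add_zero]
    rw [hD, hasFDerivAt_iff_isLittleO_nhds_zero]
    simp only [term_zero_at hh hz, ContinuousLinearMap.zero_apply, sub_zero]
    rw [Asymptotics.isLittleO_iff]
    intro c hc
    obtain ⟨C, r, hC0, hr, hB⟩ := term_bound a b 2 hh hz
    have hε : 0 < min r (c / (C + 1)) := lt_min hr (by positivity)
    rw [Metric.eventually_nhds_iff]
    refine ⟨min r (c / (C + 1)), hε, fun v hv => ?_⟩
    rw [dist_zero_right] at hv
    have hd : dist (z + v) z < r := by
      have : dist (z + v) z = ‖v‖ := by rw [dist_eq_norm]; simp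
      rw [this]
      exact lt_of_lt_of_le hv (min_le_left _ _)
    have h1 : ‖(z + v).1‖ = ‖v.1‖ := by
      simp [hz]
    have h2 : ‖v.1‖ ≤ ‖v‖ := norm_fst_le v
    calc ‖Term a b h (z + v)‖ ≤ C * ‖(z + v).1‖ ^ 2 := hB _ hd
      _ = C * ‖v.1‖ ^ 2 := by rw [h1]
      _ ≤ C * (‖v‖ * ‖v‖) := by
          rw [pow_two]
          apply mul_le_mul_of_nonneg_left _ hC0
          exact mul_le_mul h2 h2 (norm_nonneg _) (norm_nonneg _)
      _ ≤ c * ‖v‖ := by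
          rcases le_or_gt ‖v‖ 0 with h0 | h0
          · have : ‖v‖ = 0 := le_antisymm h0 (norm_nonneg _)
            rw [this]; simp
          · have hv2 : ‖v‖ ≤ c / (C + 1) := le_of_lt (lt_of_lt_of_le hv (min_le_right _ _))
            have : C * ‖v‖ ≤ c := by
              calc C * ‖v‖ ≤ C * (c / (C + 1)) := by
                    exact mul_le_mul_of_nonneg_left hv2 hC0
                _ ≤ c := by
                    rw [div_eq_mul_inv]
                    rw [mul_comm c _, ← mul_assoc]
                    have hCc : C * (C + 1)⁻¹ ≤ 1 := by
                      rw [mul_inv_le_iff₀ (by positivity), one_mul]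
                      linarith
                    nlinarith
            nlinarith
  · -- away from Z' : product rule
    have H := (hasFDerivAt_cab a b hz).smul
      ((hh.1.differentiable (by simp) z).hasFDerivAt)
    refine H.congr_fderiv ?_
    refine ContinuousLinearMap.ext fun v => ?_
    simp only [Dh, Term, ContinuousLinearMap.add_apply, ContinuousLinearMap.smul_apply,
      ContinuousLinearMap.smulRight_apply, ContinuousLinearMap.coe_comp', Function.comp_apply,
      ContinuousLinearMap.coe_smul', Pi.smul_apply, fstL_apply, conjL_apply, smul_smul, smul_eq_mul]
    module


/-- `f ↦ L.smulRight f` as a continuous linear map. -/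
def smulRightCLM (L : EE n →L[ℝ] ℂ) : F →L[ℝ] (EE n →L[ℝ] F) :=
  LinearMap.mkContinuous
    { toFun := fun f => L.smulRight f
      map_add' := fun f g => ContinuousLinearMap.ext fun w => by simp [smul_add]
      map_smul' := fun c f => ContinuousLinearMap.ext fun w => by
        simp only [ContinuousLinearMap.smulRight_apply, RingHom.id_apply,
          ContinuousLinearMap.smul_apply]
        exact smul_comm _ _ _ }
    ‖L‖ (fun f => by
      apply ContinuousLinearMap.opNorm_le_bound _ (by positivity)
      intro w
      simp only [LinearMap.coe_mk, AddHom.coe_mk, ContinuousLinearMap.smulRight_apply]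
      calc ‖L w • f‖ = ‖L w‖ * ‖f‖ := norm_smul _ _
        _ ≤ ‖L‖ * ‖w‖ * ‖f‖ := by
            apply mul_le_mul_of_nonneg_right (L.le_opNorm w) (norm_nonneg _)
        _ = ‖L‖ * ‖f‖ * ‖w‖ := by ring)

lemma good_smulRight (L : EE n →L[ℝ] ℂ) (c : ℂ) {h : EE n → F} (hh : Good n h) :
    Good n (fun z => L.smulRight (c • h z)) := by
  have g1 : Good n (fun z => (c • ContinuousLinearMap.id ℝ F) (h z)) :=
    hh.clm_comp (c • ContinuousLinearMap.id ℝ F)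
  have g2 : Good n (fun z => (smulRightCLM L) ((c • ContinuousLinearMap.id ℝ F) (h z))) :=
    g1.clm_comp (smulRightCLM L)
  exact g2

lemma iteratedFDeriv_add3 {f g h : EE n → F} {m : ℕ} (hf : ContDiff ℝ m f)
    (hg : ContDiff ℝ m g) (hh : ContDiff ℝ m h) (z : EE n) :
    iteratedFDeriv ℝ m (fun z => f z + g z + h z) z
      = iteratedFDeriv ℝ m f z + iteratedFDeriv ℝ m g z + iteratedFDeriv ℝ m h z := by
  show iteratedFDeriv ℝ m (f + g + h) z = _
  rw [iteratedFDeriv_add_apply (f := f + g) (g := h) (hf.add hg).contDiffAt hh.contDiffAt,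
    iteratedFDeriv_add_apply (f := f) (g := g) hf.contDiffAt hg.contDiffAt]

/-- Main induction: `Term a b h` is `C^k` for every `k`, with all derivatives up to order `k`
vanishing on `Z'`. -/
lemma term_good : ∀ (k : ℕ) {F : Type*} [NormedAddCommGroup F] [NormedSpace ℂ F]
    (a b : ℕ) (h : EE n → F), Good n h →
    ContDiff ℝ k (Term a b h) ∧
      ∀ z : EE n, z.1 = 0 → ∀ m : ℕ, m ≤ k → iteratedFDeriv ℝ m (Term a b h) z = 0 := by
  intro k
  induction k with
  | zero =>
    intro F _ _ a b h hh
    constructor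
    · rw [show ((0 : ℕ) : WithTop ℕ∞) = 0 from rfl, contDiff_zero]
      exact continuous_iff_continuousAt.2
        fun z => (term_hasFDerivAt a b hh z).differentiableAt.continuousAt
    · intro z hz m hm
      obtain rfl : m = 0 := Nat.le_zero.1 hm
      have : ‖iteratedFDeriv ℝ 0 (Term a b h) z‖ = 0 := by
        rw [norm_iteratedFDeriv_zero, term_zero_at hh hz, norm_zero]
      exact norm_eq_zero.1 this
  | succ k ih =>
    intro F _ _ a b h hh
    have hg0 : Good n (fderiv ℝ h) := good_fderiv hh
    have hg1 : Good n (fun z => (fstL n).smulRight ((-(a : ℂ)) • h z)) :=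
      good_smulRight (fstL n) (-(a : ℂ)) hh
    have hg2 : Good n (fun z => (conjL.comp (fstL n)).smulRight ((-(b : ℂ)) • h z)) :=
      good_smulRight (conjL.comp (fstL n)) (-(b : ℂ)) hh
    obtain ⟨c0, f0⟩ := ih a b _ hg0
    obtain ⟨c1, f1⟩ := ih (a + 1) b _ hg1
    obtain ⟨c2, f2⟩ := ih a (b + 1) _ hg2
    have hDh : fderiv ℝ (Term a b h) = Dh a b h :=
      funext fun z => (term_hasFDerivAt a b hh z).fderiv
    have hDc : ContDiff ℝ k (Dh a b h) := (c0.add c1).add c2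
    constructor
    · rw [show ((k + 1 : ℕ) : WithTop ℕ∞) = (k : WithTop ℕ∞) + 1 from by push_cast; rfl,
        contDiff_succ_iff_fderiv]
      refine ⟨fun z => (term_hasFDerivAt a b hh z).differentiableAt, ?_, ?_⟩
      · intro hω
        exact absurd hω (by simp)
      · rw [hDh]
        exact hDc
    · intro z hz m hm
      cases m with
      | zero =>
        have : ‖iteratedFDeriv ℝ 0 (Term a b h) z‖ = 0 := by
          rw [norm_iteratedFDeriv_zero, term_zero_at hh hz, norm_zero]
        exact norm_eq_zero.1 this
      | succ m' =>
        have hm' : m' ≤ k := Nat.succ_le_succ_iff.1 hm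
        have hle : (m' : WithTop ℕ∞) ≤ (k : WithTop ℕ∞) := by exact_mod_cast hm'
        rw [iteratedFDeriv_succ_eq_comp_right]
        have hz0 : iteratedFDeriv ℝ m' (fderiv ℝ (Term a b h)) z = 0 := by
          rw [hDh]
          have : iteratedFDeriv ℝ m' (Dh a b h) z
              = iteratedFDeriv ℝ m' (Term a b (fderiv ℝ h)) z
                + iteratedFDeriv ℝ m' (Term (a + 1) b _) z
                + iteratedFDeriv ℝ m' (Term a (b + 1) _) z :=
            iteratedFDeriv_add3 (c0.of_le hle) (c1.of_le hle) (c2.of_le hle) z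
          rw [this, f0 z hz m' hm', f1 z hz m' hm', f2 z hz m' hm']
          simp
        simp only [Function.comp_apply, hz0]
        exact (continuousMultilinearCurryRightEquiv' ℝ m' (EE n) F).symm.map_zero

lemma term_good_top (a b : ℕ) {h : EE n → F} (hh : Good n h) : Good n (Term a b h) := by
  constructor
  · exact contDiff_infty.2 fun k => (term_good k a b h hh).1
  · exact fun z hz m => (term_good m a b h hh).2 z hz m le_rfl

end Stmt10Aux



/-!
STATEMENT 10. `ℂ^{n+1}` is encoded as `ℂ × (Fin n → ℂ)` with first coordinate `z₀`.
If `γ : ℂ^{n+1} → ℂ` is smooth (over `ℝ`) and vanishes to infinite order on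
`Z′ = {0}×ℂⁿ`, then `γ = z₀·γ₁ = conj(z₀)·γ₂` with `γ₁, γ₂` smooth and vanishing to
infinite order on `Z′`.
-/

theorem stmt_10 (n : ℕ) (γ : ℂ × (Fin n → ℂ) → ℂ)
    (hγ : ContDiff ℝ (⊤ : ℕ∞) γ)
    (hvan : ∀ z : ℂ × (Fin n → ℂ), z.1 = 0 → ∀ m : ℕ, iteratedFDeriv ℝ m γ z = 0) :
    ∃ γ₁ γ₂ : ℂ × (Fin n → ℂ) → ℂ,
      ContDiff ℝ (⊤ : ℕ∞) γ₁ ∧ ContDiff ℝ (⊤ : ℕ∞) γ₂ ∧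
      (∀ z : ℂ × (Fin n → ℂ), z.1 = 0 → ∀ m : ℕ, iteratedFDeriv ℝ m γ₁ z = 0) ∧
      (∀ z : ℂ × (Fin n → ℂ), z.1 = 0 → ∀ m : ℕ, iteratedFDeriv ℝ m γ₂ z = 0) ∧
      (∀ z : ℂ × (Fin n → ℂ), γ z = z.1 * γ₁ z) ∧
      (∀ z : ℂ × (Fin n → ℂ), γ z = (starRingEnd ℂ) z.1 * γ₂ z) := by
  have hG : Good n γ := ⟨hγ, hvan⟩
  have h1 := term_good_top 1 0 hG
  have h2 := term_good_top 0 1 hG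
  refine ⟨Term 1 0 γ, Term 0 1 γ, h1.1, h2.1, h1.2, h2.2, ?_, ?_⟩
  · intro z
    rcases eq_or_ne z.1 0 with hz | hz
    · rw [hG.zero_at hz, hz, zero_mul]
    · simp only [Term, cab, pow_one, pow_zero, inv_one, mul_one, smul_eq_mul]
      field_simp
  · intro z
    rcases eq_or_ne z.1 0 with hz | hz
    · rw [hG.zero_at hz, hz, map_zero, zero_mul]
    · have hzc : (starRingEnd ℂ) z.1 ≠ 0 := by simpa using hz
      simp only [Term, cab, pow_one, pow_zero, inv_one, one_mul, smul_eq_mul]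
      field_simp
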